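/- arXiv:1402.4072 — 2 statements merged into one kernel-verified Lean document; each statement's English description precedes it below -/
import Mathlib

section
/- For bilinear forms h and k on an n-dimensional Euclidean space, viewed as (1,1) double forms, the p-th exterior power (in the exterior algebra of double forms) satisfies h^p ∘ k^p = p!·(h ∘ k)^p, where ∘ is the composition product of double forms. -/
/-
Double forms on the Euclidean space ℝⁿ, following Labbi's formalism.
A (p,q) double form is modelled as a real-valued function of a p-tuple and a
q-tuple of vectors (the relevant ones being those multilinear and alternating
in each block, i.e. bilinear forms on Λ^p V × Λ^q V).
-/

open scoped BigOperators RealInnerProductSpace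

noncomputable section

abbrev EucV (n : ℕ) := EuclideanSpace ℝ (Fin n)

/-- A (p,q) double form on ℝⁿ: a bilinear form on Λ^p V × Λ^q V, viewed as a
multilinear form skew-symmetric in the first p and in the last q arguments. -/
abbrev DF (n p q : ℕ) := (Fin p → EucV n) → (Fin q → EucV n) → ℝ

variable {n : ℕ}

/-- standard orthonormal basis of ℝⁿ -/
def bv (n : ℕ) (i : Fin n) : EucV n := EuclideanSpace.single i 1

/-- strictly increasing multi-indices of length p -/
def Incr (n p : ℕ) : Finset (Fin p → Fin n) :=
  Finset.univ.filter (fun f => ∀ a b : Fin p, a < b → f a < f b)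

/-- sign of a permutation, as a real number -/
def sgn {m : ℕ} (σ : Equiv.Perm (Fin m)) : ℝ := ((Equiv.Perm.sign σ : ℤ) : ℝ)

/-- exterior product of double forms:
(θ₁⊗θ₂)(θ₃⊗θ₄) = (θ₁∧θ₃)⊗(θ₂∧θ₄). -/
def extMul {p q r s : ℕ} (ω : DF n p q) (η : DF n r s) : DF n (p + r) (q + s) :=
  fun x y =>
    (p.factorial * r.factorial * q.factorial * s.factorial : ℝ)⁻¹ *
      ∑ σ : Equiv.Perm (Fin (p + r)), ∑ τ : Equiv.Perm (Fin (q + s)),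
        sgn σ * sgn τ *
          (ω (fun i => x (σ (Fin.castAdd r i))) (fun j => y (τ (Fin.castAdd s j))) *
            η (fun i => x (σ (Fin.natAdd p i))) (fun j => y (τ (Fin.natAdd q j))))

/-- composition (Greub) product of double forms: for ω₁ ∈ D^{p,q}, ω₂ ∈ D^{r,p},
(ω₁ ∘ ω₂)(u,v) = Σ_{i₁<…<i_p} ω₂(u, e_I) ω₁(e_I, v); it corresponds to the
composition of the associated operators on ΛV. -/
def compDF {p q r : ℕ} (ω₁ : DF n p q) (ω₂ : DF n r p) : DF n r q :=
  fun u v => ∑ f ∈ Incr n p, ω₂ u (fun i => bv n (f i)) * ω₁ (fun i => bv n (f i)) v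

/-- transpose of a double form -/
def transDF {p q : ℕ} (ω : DF n p q) : DF n q p := fun u v => ω v u

/-- re-indexing cast of a double form -/
def castDF {p q p' q' : ℕ} (hp : p = p') (hq : q = q') (ω : DF n p q) : DF n p' q' :=
  fun x y => ω (x ∘ Fin.cast hp) (y ∘ Fin.cast hq)

/-- Ricci contraction of double forms -/
def contractDF {p q : ℕ} (ω : DF n (p + 1) (q + 1)) : DF n p q :=
  fun x y => ∑ i : Fin n, ω (Fin.cons (bv n i) x) (Fin.cons (bv n i) y)

/-- iterated contraction c^k -/
def contractIterDF {p q : ℕ} : (k : ℕ) → DF n (p + k) (q + k) → DF n p q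
  | 0, ω => ω
  | k + 1, ω => contractIterDF k (contractDF ω)

/-- interior product i_ψ of double forms (the adjoint of left exterior
multiplication by ψ): for ψ ∈ D^{r,s} and ω ∈ D^{r+p,s+q},
(i_ψ ω)(x;y) = Σ_{I,J increasing} ψ(e_I;e_J) ω(e_I,x;e_J,y). -/
def interiorDF {r s p q : ℕ} (ψ : DF n r s) (ω : DF n (r + p) (s + q)) : DF n p q :=
  fun x y =>
    ∑ f ∈ Incr n r, ∑ g ∈ Incr n s,
      ψ (fun i => bv n (f i)) (fun j => bv n (g j)) *
        ω (Fin.append (fun i => bv n (f i)) x) (Fin.append (fun j => bv n (g j)) y)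

/-- inner product of (p,q) double forms, induced by the inner products of the
exterior powers -/
def innerDF {p q : ℕ} (ω η : DF n p q) : ℝ :=
  ∑ f ∈ Incr n p, ∑ g ∈ Incr n q,
    ω (fun i => bv n (f i)) (fun j => bv n (g j)) *
      η (fun i => bv n (f i)) (fun j => bv n (g j))

/-- the metric of ℝⁿ as a (1,1) double form -/
def gDF (n : ℕ) : DF n 1 1 := fun u v => (inner ℝ (u 0) (v 0) : ℝ)

/-- exterior powers of a (1,1) double form -/
def powDF (h : DF n 1 1) : (p : ℕ) → DF n p p
  | 0 => fun _ _ => 1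
  | p + 1 => extMul (powDF h p) h

/-- exterior product h₁h₂⋯h_p of a family of (1,1) double forms -/
def extProdDF : {p : ℕ} → (Fin p → DF n 1 1) → DF n p p
  | 0, _ => fun _ _ => 1
  | p + 1, h => extMul (extProdDF fun i => h i.castSucc) (h (Fin.last p))

/-- determinant (volume form) of an n-tuple of vectors of ℝⁿ -/
def volDF (n : ℕ) (v : Fin n → EucV n) : ℝ :=
  Matrix.det (Matrix.of fun i j => (inner ℝ (bv n i) (v j) : ℝ))

/-- double Hodge star operator on double forms:
*(θ₁⊗θ₂) = (*θ₁)⊗(*θ₂), given here by the classical formula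
(*α)(x) = Σ_{I increasing} α(e_I) vol(e_I, x) applied in each slot. -/
def starDF {p q : ℕ} (hp : p ≤ n) (hq : q ≤ n) (ω : DF n p q) : DF n (n - p) (n - q) :=
  fun x y =>
    ∑ f ∈ Incr n p, ∑ g ∈ Incr n q,
      ω (fun i => bv n (f i)) (fun j => bv n (g j)) *
        volDF n (Fin.append (fun i => bv n (f i)) x ∘ Fin.cast (Nat.add_sub_cancel' hp).symm) *
        volDF n (Fin.append (fun j => bv n (g j)) y ∘ Fin.cast (Nat.add_sub_cancel' hq).symm)

/-- the endomorphism h̄ associated to a bilinear form h: ⟪h̄ v, w⟫ = h(v,w) -/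
def hbar (h : DF n 1 1) (v : EucV n) : EucV n :=
  ∑ j : Fin n, h ![v] ![bv n j] • bv n j

/-- the adjoint endomorphism h̄*: ⟪v, h̄* w⟫ = h(v,w) -/
def hbarAdj (h : DF n 1 1) (v : EucV n) : EucV n :=
  ∑ i : Fin n, h ![bv n i] ![v] • bv n i

/-- the right extension ĥ_R = id ⊗ ĥ of (the exterior-algebra extension ĥ of) h̄,
acting on double forms via the metric identification with double vectors -/
def hhatR {p q : ℕ} (h : DF n 1 1) (ω : DF n p q) : DF n p q :=
  fun x y => ω x (fun j => hbarAdj h (y j))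

/-- determinant of (the endomorphism associated to) a bilinear form -/
def detDF (h : DF n 1 1) : ℝ :=
  Matrix.det (Matrix.of fun i j : Fin n => h ![bv n i] ![bv n j])

/-- omit one member of a family -/
def omit1 {α : Sort*} {p : ℕ} (h : Fin (p + 1) → α) (j : Fin (p + 1)) : Fin p → α :=
  fun i => h (j.succAbove i)

/-- omit two members of a family -/
def omit2 {α : Sort*} {p : ℕ} (h : Fin (p + 2) → α) (j k : Fin (p + 2)) (hjk : j < k) :
    Fin p → α :=
  omit1 (omit1 h k) ⟨j.1, by have h1 : j.1 < k.1 := hjk; have h2 : k.1 < p + 2 := k.isLt; omega⟩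

/-- the first Bianchi map 𝔖 : D^{p,q+1} → D^{p+1,q} -/
def bianchiDF {p q : ℕ} (ω : DF n p (q + 1)) : DF n (p + 1) q :=
  fun x y =>
    (p.factorial : ℝ)⁻¹ *
      ∑ σ : Equiv.Perm (Fin (p + 1)),
        sgn σ * ω (fun i => x (σ i.castSucc)) (Fin.cons (x (σ (Fin.last p))) y)

/-- the alternating operator Alt : D^{p,p} → Λ^{2p} -/
def altDF {p : ℕ} (ω : DF n p p) : (Fin (p + p) → EucV n) → ℝ :=
  fun v =>
    ((p + p).factorial : ℝ)⁻¹ *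
      ∑ σ : Equiv.Perm (Fin (p + p)),
        sgn σ * ω (fun i => v (σ (Fin.castAdd p i))) (fun i => v (σ (Fin.natAdd p i)))

/-- exterior powers of a (2,2) double form -/
def pow2DF (R : DF n 2 2) : (k : ℕ) → DF n (2 * k) (2 * k)
  | 0 => fun _ _ => 1
  | k + 1 => extMul (pow2DF R k) R

/-- the diagonal simple double form (v₁∧…∧v_p) ⊗ (v₁∧…∧v_p), as a bilinear form -/
def simpleDiag {p : ℕ} (v : Fin p → EucV n) : DF n p p :=
  fun x y =>
    Matrix.det (Matrix.of fun i j => (inner ℝ (v i) (x j) : ℝ)) *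
      Matrix.det (Matrix.of fun i j => (inner ℝ (v i) (y j) : ℝ))



/-! ### Auxiliary lemmas -/

theorem det_apply_sgn {m : ℕ} (M : Matrix (Fin m) (Fin m) ℝ) :
    M.det = ∑ σ : Equiv.Perm (Fin m), sgn σ * ∏ i, M (σ i) i := by
  simp [Matrix.det_apply, sgn, Units.smul_def, zsmul_eq_mul]

theorem sgn_mul {m : ℕ} (σ τ : Equiv.Perm (Fin m)) : sgn (σ * τ) = sgn σ * sgn τ := by
  simp [sgn]

theorem sgn_sq {m : ℕ} (τ : Equiv.Perm (Fin m)) : sgn τ * sgn τ = 1 := by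
  simp [sgn, ← Int.cast_mul, ← Units.val_mul]

theorem sum_sum_sgn_prod {m : ℕ} (M : Matrix (Fin m) (Fin m) ℝ) :
    ∑ σ : Equiv.Perm (Fin m), ∑ τ : Equiv.Perm (Fin m),
      sgn σ * sgn τ * ∏ i, M (σ i) (τ i)
    = (Nat.factorial m : ℝ) * M.det := by
  rw [Finset.sum_comm]
  have key : ∀ τ : Equiv.Perm (Fin m),
      ∑ σ : Equiv.Perm (Fin m), sgn σ * sgn τ * ∏ i, M (σ i) (τ i) = M.det := by
    intro τ
    rw [det_apply_sgn]
    refine (Fintype.sum_equiv (Equiv.mulRight τ)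
      (fun ρ => sgn ρ * ∏ i, M (ρ i) i)
      (fun σ => sgn σ * sgn τ * ∏ i, M (σ i) (τ i)) fun ρ => ?_).symm
    simp only [Equiv.coe_mulRight, sgn_mul, Equiv.Perm.mul_apply]
    rw [Equiv.prod_comp τ (fun j => M (ρ j) j)]
    rw [mul_assoc (sgn ρ) (sgn τ) (sgn τ), sgn_sq, mul_one]
  rw [Finset.sum_congr rfl fun τ _ => key τ]
  rw [Finset.sum_const, Finset.card_univ, Fintype.card_perm, Fintype.card_fin, nsmul_eq_mul]

/-- extension of a permutation of `Fin p` to `Fin (p+1)` fixing the last element -/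
def ext1 {p : ℕ} (π : Equiv.Perm (Fin p)) : Equiv.Perm (Fin (p+1)) :=
  π.viaFintypeEmbedding (Fin.castSuccEmb)

theorem ext1_castSucc {p : ℕ} (π : Equiv.Perm (Fin p)) (i : Fin p) :
    ext1 π (Fin.castAdd 1 i) = Fin.castAdd 1 (π i) := by
  have := Equiv.Perm.viaFintypeEmbedding_apply_image π Fin.castSuccEmb i
  simpa [ext1, Fin.castSuccEmb] using this

theorem ext1_last {p : ℕ} (π : Equiv.Perm (Fin p)) :
    ext1 π (Fin.natAdd p 0) = Fin.natAdd p 0 := by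
  have hl : (Fin.natAdd p 0 : Fin (p+1)) = Fin.last p := by ext; simp
  rw [hl]
  apply Equiv.Perm.viaFintypeEmbedding_apply_notMem_range
  simp [Fin.castSuccEmb]
  exact hl.le

theorem sgn_ext1 {p : ℕ} (π : Equiv.Perm (Fin p)) : sgn (ext1 π) = sgn π := by
  simp [sgn, ext1]

theorem perm_det_aux {p : ℕ} (M : Matrix (Fin (p+1)) (Fin (p+1)) ℝ) :
    ∑ σ : Equiv.Perm (Fin (p+1)), ∑ τ : Equiv.Perm (Fin (p+1)),
      sgn σ * sgn τ *
        ((Matrix.of fun i j : Fin p => M (σ (Fin.castAdd 1 i)) (τ (Fin.castAdd 1 j))).det *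
          M (σ (Fin.natAdd p 0)) (τ (Fin.natAdd p 0)))
    = (Nat.factorial p : ℝ) * (Nat.factorial (p+1) : ℝ) * M.det := by
  have step1 : ∀ σ τ : Equiv.Perm (Fin (p+1)),
      sgn σ * sgn τ *
        ((Matrix.of fun i j : Fin p => M (σ (Fin.castAdd 1 i)) (τ (Fin.castAdd 1 j))).det *
          M (σ (Fin.natAdd p 0)) (τ (Fin.natAdd p 0)))
      = ∑ π : Equiv.Perm (Fin p),
          sgn π * (sgn σ * sgn τ *
            ((∏ i, M (σ (Fin.castAdd 1 (π i))) (τ (Fin.castAdd 1 i))) *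
              M (σ (Fin.natAdd p 0)) (τ (Fin.natAdd p 0)))) := by
    intro σ τ
    rw [det_apply_sgn, Finset.sum_mul, Finset.mul_sum]
    refine Finset.sum_congr rfl fun π _ => ?_
    simp only [Matrix.of_apply]
    ring
  rw [Finset.sum_congr rfl fun σ _ => Finset.sum_congr rfl fun τ _ => step1 σ τ]
  rw [Finset.sum_congr rfl fun σ _ => Finset.sum_comm]
  rw [Finset.sum_comm]
  have hca : ∀ i : Fin p, Fin.castAdd 1 i = Fin.castSucc i := fun i => rfl
  have hna : (Fin.natAdd p 0 : Fin (p+1)) = Fin.last p := by ext; simp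
  have step2 : ∀ π : Equiv.Perm (Fin p),
      (∑ σ : Equiv.Perm (Fin (p+1)), ∑ τ : Equiv.Perm (Fin (p+1)),
        sgn π * (sgn σ * sgn τ *
          ((∏ i, M (σ (Fin.castAdd 1 (π i))) (τ (Fin.castAdd 1 i))) *
            M (σ (Fin.natAdd p 0)) (τ (Fin.natAdd p 0)))))
      = ∑ σ : Equiv.Perm (Fin (p+1)), ∑ τ : Equiv.Perm (Fin (p+1)),
          sgn σ * sgn τ * ∏ i, M (σ i) (τ i) := by
    intro π
    refine (Fintype.sum_equiv (Equiv.mulRight (ext1 π⁻¹))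
      (fun σ => ∑ τ : Equiv.Perm (Fin (p+1)), sgn σ * sgn τ * ∏ i, M (σ i) (τ i))
      _ fun σ => ?_).symm
    refine Finset.sum_congr rfl fun τ _ => ?_
    simp only [Equiv.coe_mulRight, Equiv.Perm.mul_apply]
    have h1 : ∀ i : Fin p, σ (ext1 π⁻¹ (Fin.castAdd 1 (π i))) = σ (Fin.castAdd 1 i) := by
      intro i; rw [ext1_castSucc]; simp
    have h2 : σ (ext1 π⁻¹ (Fin.natAdd p 0)) = σ (Fin.natAdd p 0) := by rw [ext1_last]
    simp only [h1, h2]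
    rw [sgn_mul, sgn_ext1]
    have hs : sgn π⁻¹ = sgn π := by simp [sgn]
    rw [hs]
    have hprod : (∏ i : Fin (p+1), M (σ i) (τ i))
        = (∏ i : Fin p, M (σ (Fin.castAdd 1 i)) (τ (Fin.castAdd 1 i))) *
            M (σ (Fin.natAdd p 0)) (τ (Fin.natAdd p 0)) := by
      rw [Fin.prod_univ_castSucc]
      simp only [hca, hna]
    rw [hprod]
    have h3 : sgn π ^ 2 = 1 := by rw [sq]; exact sgn_sq π
    ring_nf
    rw [h3, mul_one]
  rw [Finset.sum_congr rfl fun π _ => step2 π]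
  rw [Finset.sum_const, Finset.card_univ, Fintype.card_perm, Fintype.card_fin, nsmul_eq_mul,
    sum_sum_sgn_prod]
  ring

theorem powDet (h : DF n 1 1) : ∀ (p : ℕ) (x y : Fin p → EucV n),
    powDF h p x y = (p.factorial : ℝ) * (Matrix.of fun i j => h ![x i] ![y j]).det := by
  intro p
  induction p with
  | zero =>
    intro x y
    simp [powDF, Matrix.det_fin_zero]
  | succ p ih =>
    intro x y
    set M : Matrix (Fin (p+1)) (Fin (p+1)) ℝ := Matrix.of fun i j => h ![x i] ![y j] with hMdef
    show extMul (powDF h p) h x y = _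
    simp only [extMul]
    have key : ∀ (σ τ : Equiv.Perm (Fin (p+1))),
        sgn σ * sgn τ *
          (powDF h p (fun i => x (σ (Fin.castAdd 1 i))) (fun j => y (τ (Fin.castAdd 1 j))) *
            h (fun i => x (σ (Fin.natAdd p i))) (fun j => y (τ (Fin.natAdd p j))))
        = (p.factorial : ℝ) * (sgn σ * sgn τ *
            ((Matrix.of fun i j : Fin p => M (σ (Fin.castAdd 1 i)) (τ (Fin.castAdd 1 j))).det *
              M (σ (Fin.natAdd p 0)) (τ (Fin.natAdd p 0)))) := by
      intro σ τ
      have e1 : powDF h p (fun i => x (σ (Fin.castAdd 1 i))) (fun j => y (τ (Fin.castAdd 1 j)))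
          = (p.factorial : ℝ) *
            (Matrix.of fun i j : Fin p => M (σ (Fin.castAdd 1 i)) (τ (Fin.castAdd 1 j))).det :=
        ih _ _
      have a1 : (fun i : Fin 1 => x (σ (Fin.natAdd p i))) = ![x (σ (Fin.natAdd p 0))] := by
        funext i; fin_cases i; simp
      have a2 : (fun j : Fin 1 => y (τ (Fin.natAdd p j))) = ![y (τ (Fin.natAdd p 0))] := by
        funext j; fin_cases j; simp
      have e2 : h (fun i => x (σ (Fin.natAdd p i))) (fun j => y (τ (Fin.natAdd p j)))
          = M (σ (Fin.natAdd p 0)) (τ (Fin.natAdd p 0)) := by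
        rw [a1, a2]; rfl
      rw [e1, e2]; ring
    rw [Finset.sum_congr rfl fun σ _ => Finset.sum_congr rfl fun τ _ => key σ τ]
    simp only [← Finset.mul_sum]
    rw [perm_det_aux M]
    have hp : (p.factorial : ℝ) ≠ 0 := Nat.cast_ne_zero.2 (Nat.factorial_ne_zero p)
    rw [Nat.factorial_one]
    push_cast
    field_simp

theorem mem_Incr_iff {n p : ℕ} (f : Fin p → Fin n) : f ∈ Incr n p ↔ StrictMono f := by
  simp only [Incr, Finset.mem_filter, Finset.mem_univ, true_and]
  exact ⟨fun h a b hab => h a b hab, fun h a b hab => h hab⟩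

theorem cauchyBinet {n p : ℕ} (A : Matrix (Fin p) (Fin n) ℝ) (B : Matrix (Fin n) (Fin p) ℝ) :
    (A * B).det = ∑ f ∈ Incr n p, (A.submatrix id f).det * (B.submatrix f id).det := by
  classical
  have expand : (A * B).det
      = ∑ f : Fin p → Fin n, (A.submatrix id f).det * ∏ i, B (f i) i := by
    rw [det_apply_sgn]
    have step : ∀ σ : Equiv.Perm (Fin p),
        sgn σ * ∏ i, (A * B) (σ i) i
        = ∑ f : Fin p → Fin n, sgn σ * ((∏ i, A (σ i) (f i)) * ∏ i, B (f i) i) := by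
      intro σ
      simp only [Matrix.mul_apply]
      rw [Finset.prod_univ_sum, Fintype.piFinset_univ, Finset.mul_sum]
      refine Finset.sum_congr rfl fun f _ => ?_
      rw [Finset.prod_mul_distrib]
    rw [Finset.sum_congr rfl fun σ _ => step σ]
    rw [Finset.sum_comm]
    refine Finset.sum_congr rfl fun f _ => ?_
    rw [det_apply_sgn, Finset.sum_mul]
    refine Finset.sum_congr rfl fun σ _ => ?_
    simp only [Matrix.submatrix_apply, id_eq]
    ring
  rw [expand]
  rw [← Finset.sum_filter_add_sum_filter_not Finset.univ (fun f => Function.Injective f)]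
  have hnon : ∑ f ∈ Finset.univ.filter (fun f : Fin p → Fin n => ¬ Function.Injective f),
      (A.submatrix id f).det * ∏ i, B (f i) i = 0 := by
    apply Finset.sum_eq_zero
    intro f hf
    simp only [Finset.mem_filter, Finset.mem_univ, true_and] at hf
    rw [Function.not_injective_iff] at hf
    obtain ⟨a, b, hab, hne⟩ := hf
    have : (A.submatrix id f).det = 0 := by
      apply Matrix.det_zero_of_column_eq hne
      intro k
      simp [Matrix.submatrix_apply, hab]
    rw [this, zero_mul]
  rw [hnon, add_zero]
  have hbij : ∑ f ∈ Finset.univ.filter (fun f : Fin p → Fin n => Function.Injective f),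
      (A.submatrix id f).det * ∏ i, B (f i) i
      = ∑ gs ∈ (Incr n p) ×ˢ (Finset.univ : Finset (Equiv.Perm (Fin p))),
          (A.submatrix id (gs.1 ∘ ⇑gs.2)).det * ∏ i, B (gs.1 (gs.2 i)) i := by
    refine Finset.sum_bij' (i := fun f _ => ((f ∘ ⇑(Tuple.sort f), (Tuple.sort f)⁻¹) :
        (Fin p → Fin n) × Equiv.Perm (Fin p)))
      (j := fun gs _ => gs.1 ∘ ⇑gs.2) ?_ ?_ ?_ ?_ ?_
    · -- i maps into product set
      intro f hf
      simp only [Finset.mem_filter, Finset.mem_univ, true_and] at hf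
      rw [Finset.mem_product]
      refine ⟨(mem_Incr_iff _).2 ?_, Finset.mem_univ _⟩
      exact (Tuple.monotone_sort f).strictMono_of_injective (hf.comp (Equiv.injective _))
    · -- j maps into filter
      intro gs hgs
      rw [Finset.mem_product] at hgs
      simp only [Finset.mem_filter, Finset.mem_univ, true_and]
      exact ((mem_Incr_iff _).1 hgs.1).injective.comp (Equiv.injective _)
    · -- left inverse : j (i f) = f
      intro f hf
      funext i
      simp
    · -- right inverse : i (j gs) = gs
      intro gs hgs
      rw [Finset.mem_product] at hgs
      obtain ⟨g, σ⟩ := gs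
      have hg : StrictMono g := (mem_Incr_iff _).1 hgs.1
      have hsort : Tuple.sort (g ∘ ⇑σ) = σ⁻¹ := by
        have h1 : Monotone ((g ∘ ⇑σ) ∘ ⇑(Tuple.sort (g ∘ ⇑σ))) := Tuple.monotone_sort _
        have h2 : Monotone ((g ∘ ⇑σ) ∘ ⇑σ⁻¹) := by
          have : (g ∘ ⇑σ) ∘ ⇑σ⁻¹ = g := by funext i; simp
          rw [this]; exact hg.monotone
        have := Tuple.unique_monotone h1 h2
        have hinj : Function.Injective (g ∘ ⇑σ) := hg.injective.comp (Equiv.injective _)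
        ext i : 1
        have := congrFun this i
        simp only [Function.comp_apply] at this
        exact hinj this
      show ((g ∘ ⇑σ) ∘ ⇑(Tuple.sort (g ∘ ⇑σ)), (Tuple.sort (g ∘ ⇑σ))⁻¹) = (g, σ)
      rw [hsort]
      refine Prod.ext ?_ (by simp)
      funext i
      simp
    · -- values agree
      intro f hf
      have hcomp : (f ∘ ⇑(Tuple.sort f)) ∘ ⇑(Tuple.sort f)⁻¹ = f := by funext i; simp
      show _ = (A.submatrix id ((f ∘ ⇑(Tuple.sort f)) ∘ ⇑(Tuple.sort f)⁻¹)).det *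
        ∏ i, B ((f ∘ ⇑(Tuple.sort f)) ((Tuple.sort f)⁻¹ i)) i
      rw [hcomp]
      simp only [Function.comp_apply, Equiv.Perm.inv_def, Equiv.apply_symm_apply]
  rw [hbij, Finset.sum_product]
  refine Finset.sum_congr rfl fun g hg => ?_
  have hdet : ∀ σ : Equiv.Perm (Fin p),
      (A.submatrix id (g ∘ ⇑σ)).det = sgn σ * (A.submatrix id g).det := by
    intro σ
    have e : A.submatrix id (g ∘ ⇑σ) = (A.submatrix id g).submatrix id ⇑σ := rfl
    rw [e, Matrix.det_permute']
    simp [sgn, Units.smul_def, zsmul_eq_mul]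
  rw [Finset.sum_congr rfl fun σ _ => by rw [hdet σ]]
  rw [det_apply_sgn (B.submatrix g id)]
  rw [Finset.mul_sum]
  refine Finset.sum_congr rfl fun σ _ => ?_
  simp only [Matrix.submatrix_apply, id_eq]
  ring

/-- Greub–Vanstone: h^p ∘ k^p = p! (h∘k)^p for (1,1) double forms
h, k, where powers are exterior powers of double forms and ∘ is the
composition product. -/
theorem stmt0 (n p : ℕ) (h k : DF n 1 1) :
    compDF (powDF h p) (powDF k p) = (p.factorial : ℝ) • powDF (compDF h k) p := by
  funext u v
  have hIncr1 : Incr n 1 = (Finset.univ : Finset (Fin 1 → Fin n)) := by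
    rw [Incr, Finset.filter_true_of_mem]
    intro f _ a b hab
    rw [Fin.lt_def] at hab
    have h1 := a.isLt
    have h2 := b.isLt
    omega
  set A : Matrix (Fin p) (Fin n) ℝ := Matrix.of fun i m => k ![u i] ![bv n m] with hA
  set B : Matrix (Fin n) (Fin p) ℝ := Matrix.of fun m j => h ![bv n m] ![v j] with hB
  have hAB : A * B = Matrix.of fun i j => compDF h k ![u i] ![v j] := by
    funext i j
    show ∑ m, A i m * B m j = compDF h k ![u i] ![v j]
    simp only [compDF]
    rw [hIncr1]
    refine (Fintype.sum_equiv (Equiv.funUnique (Fin 1) (Fin n))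
      (fun f : Fin 1 → Fin n =>
        k ![u i] (fun l => bv n (f l)) * h (fun l => bv n (f l)) ![v j])
      (fun m => A i m * B m j) fun f => ?_).symm
    have hf : (fun l : Fin 1 => bv n (f l)) = ![bv n (f 0)] := by
      funext l; fin_cases l; simp
    show (k ![u i] fun l => bv n (f l)) * h (fun l => bv n (f l)) ![v j]
      = A i (f 0) * B (f 0) j
    rw [hf]
    rfl
  have lhs : compDF (powDF h p) (powDF k p) u v
      = ∑ f ∈ Incr n p, ((p.factorial : ℝ) * (A.submatrix id f).det) *
          ((p.factorial : ℝ) * (B.submatrix f id).det) := by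
    simp only [compDF]
    refine Finset.sum_congr rfl fun f _ => ?_
    rw [powDet k p u (fun i => bv n (f i)), powDet h p (fun i => bv n (f i)) v]
    rfl
  rw [lhs, Pi.smul_apply, Pi.smul_apply, smul_eq_mul,
    powDet (compDF h k) p u v, ← hAB, cauchyBinet, Finset.mul_sum, Finset.mul_sum]
  refine Finset.sum_congr rfl fun f _ => by ring
end
end

section
/- The double Hodge star operator is a homomorphism for the composition product of double forms: for any double forms ω_1, ω_2, one has *(ω_1 ∘ ω_2) = (*ω_1) ∘ (*ω_2). -/
/-
Double forms on the Euclidean space ℝⁿ, following Labbi's formalism.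
A (p,q) double form is modelled as a real-valued function of a p-tuple and a
q-tuple of vectors (the relevant ones being those multilinear and alternating
in each block, i.e. bilinear forms on Λ^p V × Λ^q V).
-/

open scoped BigOperators RealInnerProductSpace

noncomputable section

variable {n : ℕ}

section Stmt10Aux

lemma mem_Incr {p : ℕ} {f : Fin p → Fin n} : f ∈ Incr n p ↔ StrictMono f := by
  simp [Incr, StrictMono]

lemma inner_bv (i j : Fin n) : (inner ℝ (bv n i) (bv n j) : ℝ) = if j = i then 1 else 0 := by
  simp [bv, EuclideanSpace.inner_single_left, EuclideanSpace.single_apply, eq_comm]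

def matM (k : Fin n → Fin n) : Matrix (Fin n) (Fin n) ℝ :=
  Matrix.of fun i j => if k j = i then 1 else 0

lemma volDF_comp (k : Fin n → Fin n) :
    volDF n (fun j => bv n (k j)) = (matM k).det := by
  unfold volDF matM
  congr 1
  ext i j
  simp only [Matrix.of_apply]
  rw [inner_bv]

lemma matM_det_zero {k : Fin n → Fin n} (hk : ¬ Function.Injective k) :
    (matM k).det = 0 := by
  rw [← Matrix.det_transpose]
  simp only [Function.Injective, not_forall] at hk
  obtain ⟨a, b, hab, hne⟩ := hk
  exact Matrix.det_zero_of_row_eq hne (by funext i; simp [matM, Matrix.transpose_apply, hab])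

lemma matM_det_sq {k : Fin n → Fin n} (hk : Function.Injective k) :
    (matM k).det * (matM k).det = 1 := by
  have hb : Function.Bijective k := Finite.injective_iff_bijective.mp hk
  set e := Equiv.ofBijective k hb with he
  have hke : ∀ j, k j = e j := fun j => rfl
  have hM : matM k * (matM k).transpose = 1 := by
    ext i i'
    simp only [Matrix.mul_apply, matM, Matrix.transpose_apply, Matrix.of_apply]
    have hkj : ∀ (j i : Fin n), (k j = i) = (j = e.symm i) := by
      intro j i
      rw [hke]
      exact propext (Equiv.apply_eq_iff_eq_symm_apply e)
    simp_rw [hkj]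
    simp [Finset.sum_ite_eq', Matrix.one_apply, EmbeddingLike.apply_eq_iff_eq, eq_comm]
  have := congrArg Matrix.det hM
  rwa [Matrix.det_mul, Matrix.det_transpose, Matrix.det_one] at this

variable {p : ℕ}

def Kf (hp : p ≤ n) (f : Fin p → Fin n) (g : Fin (n - p) → Fin n) : Fin n → Fin n :=
  Fin.append f g ∘ Fin.cast (Nat.add_sub_cancel' hp).symm

lemma bv_append {m : ℕ} (f : Fin p → Fin n) (g : Fin m → Fin n) (i : Fin (p + m)) :
    Fin.append (fun i => bv n (f i)) (fun j => bv n (g j)) i = bv n (Fin.append f g i) := by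
  induction i using Fin.addCases with
  | left i => simp [Fin.append_left]
  | right i => simp [Fin.append_right]

lemma vol_append_bv (hp : p ≤ n) (h : Fin p → Fin n) (F : Fin (n - p) → Fin n) :
    volDF n (Fin.append (fun i => bv n (h i)) (fun j => bv n (F j)) ∘
      Fin.cast (Nat.add_sub_cancel' hp).symm) = (matM (Kf hp h F)).det := by
  rw [← volDF_comp]
  congr 1
  funext j
  simp only [Function.comp_apply, Kf]
  exact bv_append h F _

lemma Kf_inj_iff (hp : p ≤ n) (h : Fin p → Fin n) (F : Fin (n - p) → Fin n) :
    Function.Injective (Kf hp h F) ↔ Function.Injective (Fin.append h F) := by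
  have : Kf hp h F = Fin.append h F ∘ ⇑(finCongr (Nat.add_sub_cancel' hp).symm) := rfl
  rw [this, EquivLike.injective_comp]

lemma append_inj_of {m : ℕ} {α : Type*} {f : Fin p → α} {g : Fin m → α}
    (hf : Function.Injective f) (hg : Function.Injective g)
    (hd : ∀ i j, f i ≠ g j) : Function.Injective (Fin.append f g) := by
  intro a b
  induction a using Fin.addCases with
  | left i =>
    induction b using Fin.addCases with
    | left j =>
      rw [Fin.append_left, Fin.append_left]; exact fun hab => congrArg _ (hf hab)
    | right j =>
      rw [Fin.append_left, Fin.append_right]; exact fun hab => absurd hab (hd i j)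
  | right i =>
    induction b using Fin.addCases with
    | left j =>
      rw [Fin.append_right, Fin.append_left]; exact fun hab => absurd hab.symm (hd j i)
    | right j =>
      rw [Fin.append_right, Fin.append_right]; exact fun hab => congrArg _ (hg hab)

lemma inj_parts {m : ℕ} {α : Type*} {f : Fin p → α} {g : Fin m → α}
    (H : Function.Injective (Fin.append f g)) :
    Function.Injective f ∧ Function.Injective g ∧ ∀ i j, f i ≠ g j := by
  refine ⟨fun a b hab => ?_, fun a b hab => ?_, fun i j hij => ?_⟩
  · have := H (a₁ := Fin.castAdd m a) (a₂ := Fin.castAdd m b)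
      (by rw [Fin.append_left, Fin.append_left]; exact hab)
    have h2 := congrArg Fin.val this
    simp only [Fin.coe_castAdd] at h2
    exact Fin.ext h2
  · have := H (a₁ := Fin.natAdd p a) (a₂ := Fin.natAdd p b)
      (by rw [Fin.append_right, Fin.append_right]; exact hab)
    have h2 := congrArg Fin.val this
    simp only [Fin.coe_natAdd] at h2
    exact Fin.ext (by omega)
  · have := H (a₁ := Fin.castAdd m i) (a₂ := Fin.natAdd p j)
      (by rw [Fin.append_left, Fin.append_right]; exact hij)
    have h2 := congrArg Fin.val this
    simp only [Fin.coe_castAdd, Fin.coe_natAdd] at h2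
    omega

lemma card_complS (hp : p ≤ n) {h : Fin p → Fin n} (hinj : Function.Injective h) :
    ((Finset.image h Finset.univ)ᶜ).card = n - p := by
  rw [Finset.card_compl, Finset.card_image_of_injective _ hinj]
  simp

def complF (hp : p ≤ n) (h : Fin p → Fin n) (hinj : Function.Injective h) :
    Fin (n - p) → Fin n :=
  fun j => (Finset.image h Finset.univ)ᶜ.orderEmbOfFin (card_complS hp hinj) j

lemma complF_strictMono (hp : p ≤ n) {h : Fin p → Fin n} (hinj : Function.Injective h) :
    StrictMono (complF hp h hinj) :=
  ((Finset.image h Finset.univ)ᶜ.orderEmbOfFin (card_complS hp hinj)).strictMono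

lemma Kf_complF_inj (hp : p ≤ n) {h : Fin p → Fin n} (hh : StrictMono h) :
    Function.Injective (Kf hp h (complF hp h hh.injective)) := by
  rw [Kf_inj_iff]
  apply append_inj_of hh.injective (complF_strictMono hp hh.injective).injective
  intro i j hij
  have hmem : complF hp h hh.injective j ∈ (Finset.image h Finset.univ)ᶜ :=
    Finset.orderEmbOfFin_mem _ _ _
  rw [Finset.mem_compl] at hmem
  exact hmem (Finset.mem_image.2 ⟨i, Finset.mem_univ i, hij⟩)

lemma F_eq_complF (hp : p ≤ n) {h : Fin p → Fin n} {F : Fin (n - p) → Fin n}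
    (hh : StrictMono h) (hF : StrictMono F)
    (Hinj : Function.Injective (Kf hp h F)) : F = complF hp h hh.injective := by
  rw [Kf_inj_iff] at Hinj
  obtain ⟨-, -, hd⟩ := inj_parts Hinj
  exact Finset.orderEmbOfFin_unique (card_complS hp hh.injective)
    (fun x => Finset.mem_compl.2 fun hx => by
      obtain ⟨i, -, hi⟩ := Finset.mem_image.1 hx
      exact hd i x hi) hF

lemma h_eq_of (hp : p ≤ n) {h h' : Fin p → Fin n} {F : Fin (n - p) → Fin n}
    (hh : StrictMono h) (hh' : StrictMono h') (hF : StrictMono F)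
    (H1 : Function.Injective (Kf hp h F)) (H2 : Function.Injective (Kf hp h' F)) :
    h = h' := by
  have cardF : ((Finset.image F Finset.univ)ᶜ).card = p := by
    rw [Finset.card_compl, Finset.card_image_of_injective _ hF.injective]
    simp [Nat.sub_sub_self hp]
  rw [Kf_inj_iff] at H1 H2
  obtain ⟨-, -, hd1⟩ := inj_parts H1
  obtain ⟨-, -, hd2⟩ := inj_parts H2
  have e1 := Finset.orderEmbOfFin_unique cardF
    (f := h) (fun x => Finset.mem_compl.2 fun hx => by
      obtain ⟨j, -, hj⟩ := Finset.mem_image.1 hx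
      exact hd1 x j hj.symm) hh
  have e2 := Finset.orderEmbOfFin_unique cardF
    (f := h') (fun x => Finset.mem_compl.2 fun hx => by
      obtain ⟨j, -, hj⟩ := Finset.mem_image.1 hx
      exact hd2 x j hj.symm) hh'
  rw [e1, e2]

lemma sumV (hp : p ≤ n) {h h' : Fin p → Fin n} (hh : StrictMono h) (hh' : StrictMono h') :
    ∑ F ∈ Incr n (n - p), (matM (Kf hp h F)).det * (matM (Kf hp h' F)).det
      = if h = h' then 1 else 0 := by
  by_cases heq : h = h'
  · subst heq
    rw [if_pos rfl, Finset.sum_eq_single (complF hp h hh.injective)]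
    · exact matM_det_sq (Kf_complF_inj hp hh)
    · intro F hF hne
      have hni : ¬ Function.Injective (Kf hp h F) :=
        fun H => hne (F_eq_complF hp hh (mem_Incr.1 hF) H)
      rw [matM_det_zero hni, zero_mul]
    · intro habs
      exact absurd (mem_Incr.2 (complF_strictMono hp hh.injective)) habs
  · rw [if_neg heq]
    apply Finset.sum_eq_zero
    intro F hF
    by_contra hne
    have i1 : Function.Injective (Kf hp h F) := by
      by_contra hI
      exact hne (by rw [matM_det_zero hI, zero_mul])
    have i2 : Function.Injective (Kf hp h' F) := by
      by_contra hI
      exact hne (by rw [matM_det_zero hI, mul_zero])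
    exact heq (h_eq_of hp hh hh' (mem_Incr.1 hF) i1 i2)

lemma main_sum {ι₁ ι₂ ι₃ ιF : Type*} [DecidableEq ι₃]
    (s₁ : Finset ι₁) (s₂ : Finset ι₂) (s₃ : Finset ι₃) (sF : Finset ιF)
    (a : ι₁ → ι₃ → ℝ) (b : ι₃ → ι₂ → ℝ) (W : ι₃ → ιF → ℝ)
    (hW : ∀ h ∈ s₃, ∀ h' ∈ s₃, ∑ F ∈ sF, W h F * W h' F = if h = h' then 1 else 0) :
    ∑ F ∈ sF, (∑ f ∈ s₁, ∑ h ∈ s₃, a f h * W h F) * (∑ h' ∈ s₃, ∑ g ∈ s₂, b h' g * W h' F)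
      = ∑ f ∈ s₁, ∑ g ∈ s₂, ∑ h ∈ s₃, a f h * b h g := by
  calc
    ∑ F ∈ sF, (∑ f ∈ s₁, ∑ h ∈ s₃, a f h * W h F) * (∑ h' ∈ s₃, ∑ g ∈ s₂, b h' g * W h' F)
        = ∑ F ∈ sF, ∑ f ∈ s₁, ∑ h' ∈ s₃, ∑ h ∈ s₃, ∑ g ∈ s₂,
            (a f h * b h' g) * (W h F * W h' F) := by
      refine Finset.sum_congr rfl fun F _ => ?_
      rw [Finset.sum_mul_sum]
      refine Finset.sum_congr rfl fun f _ => Finset.sum_congr rfl fun h' _ => ?_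
      rw [Finset.sum_mul]
      refine Finset.sum_congr rfl fun h _ => ?_
      rw [Finset.mul_sum]
      refine Finset.sum_congr rfl fun g _ => by ring
    _ = ∑ f ∈ s₁, ∑ h' ∈ s₃, ∑ h ∈ s₃, ∑ g ∈ s₂,
            (a f h * b h' g) * (∑ F ∈ sF, W h F * W h' F) := by
      rw [Finset.sum_comm]
      refine Finset.sum_congr rfl fun f _ => ?_
      rw [Finset.sum_comm]
      refine Finset.sum_congr rfl fun h' _ => ?_
      rw [Finset.sum_comm]
      refine Finset.sum_congr rfl fun h _ => ?_
      rw [Finset.sum_comm]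
      refine Finset.sum_congr rfl fun g _ => ?_
      rw [Finset.mul_sum]
    _ = ∑ f ∈ s₁, ∑ h' ∈ s₃, ∑ g ∈ s₂, a f h' * b h' g := by
      refine Finset.sum_congr rfl fun f _ => Finset.sum_congr rfl fun h' hh' => ?_
      have : ∀ h ∈ s₃, ∑ g ∈ s₂, (a f h * b h' g) * (∑ F ∈ sF, W h F * W h' F)
          = ∑ g ∈ s₂, if h = h' then a f h * b h' g else 0 := by
        intro h hh
        refine Finset.sum_congr rfl fun g _ => ?_
        rw [hW h hh h' hh', mul_ite, mul_one, mul_zero]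
      rw [Finset.sum_congr rfl this, Finset.sum_comm]
      refine Finset.sum_congr rfl fun g _ => ?_
      rw [Finset.sum_ite_eq' s₃ h' (fun h => a f h * b h' g), if_pos hh']
    _ = ∑ f ∈ s₁, ∑ g ∈ s₂, ∑ h ∈ s₃, a f h * b h g :=
      Finset.sum_congr rfl fun f _ => Finset.sum_comm

end Stmt10Aux

/-- the double Hodge star is a composition-algebra homomorphism:
*(ω₁∘ω₂) = (*ω₁)∘(*ω₂). -/
theorem stmt10 (n p q r : ℕ) (hp : p ≤ n) (hq : q ≤ n) (hr : r ≤ n)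
    (ω₁ : DF n p q) (ω₂ : DF n r p) :
    starDF hr hq (compDF ω₁ ω₂) = compDF (starDF hp hq ω₁) (starDF hr hp ω₂) := by
  classical
  funext x y
  simp only [starDF, compDF]
  simp only [vol_append_bv hp]
  set V1 : (Fin r → Fin n) → ℝ := fun f =>
    volDF n (Fin.append (fun i => bv n (f i)) x ∘ Fin.cast (Nat.add_sub_cancel' hr).symm) with hV1
  set V2 : (Fin q → Fin n) → ℝ := fun g =>
    volDF n (Fin.append (fun j => bv n (g j)) y ∘ Fin.cast (Nat.add_sub_cancel' hq).symm) with hV2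
  symm
  calc
    ∑ F ∈ Incr n (n - p),
        (∑ f ∈ Incr n r, ∑ h ∈ Incr n p,
          ω₂ (fun i => bv n (f i)) (fun j => bv n (h j)) * V1 f * (matM (Kf hp h F)).det) *
        (∑ h' ∈ Incr n p, ∑ g ∈ Incr n q,
          ω₁ (fun i => bv n (h' i)) (fun j => bv n (g j)) * (matM (Kf hp h' F)).det * V2 g)
        = ∑ F ∈ Incr n (n - p),
        (∑ f ∈ Incr n r, ∑ h ∈ Incr n p,
          (ω₂ (fun i => bv n (f i)) (fun j => bv n (h j)) * V1 f) * (matM (Kf hp h F)).det) *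
        (∑ h' ∈ Incr n p, ∑ g ∈ Incr n q,
          (ω₁ (fun i => bv n (h' i)) (fun j => bv n (g j)) * V2 g) * (matM (Kf hp h' F)).det) := by
      refine Finset.sum_congr rfl fun F _ => ?_
      congr 1
      refine Finset.sum_congr rfl fun h' _ => Finset.sum_congr rfl fun g _ => by ring
    _ = ∑ f ∈ Incr n r, ∑ g ∈ Incr n q, ∑ h ∈ Incr n p,
          (ω₂ (fun i => bv n (f i)) (fun j => bv n (h j)) * V1 f) *
          (ω₁ (fun i => bv n (h i)) (fun j => bv n (g j)) * V2 g) :=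
      main_sum (Incr n r) (Incr n q) (Incr n p) (Incr n (n - p)) _ _ _
        (fun h hh h' hh' => sumV hp (mem_Incr.1 hh) (mem_Incr.1 hh'))
    _ = ∑ f ∈ Incr n r, ∑ g ∈ Incr n q,
          (∑ h ∈ Incr n p,
            ω₂ (fun i => bv n (f i)) (fun j => bv n (h j)) *
              ω₁ (fun i => bv n (h i)) (fun j => bv n (g j))) * V1 f * V2 g := by
      refine Finset.sum_congr rfl fun f _ => Finset.sum_congr rfl fun g _ => ?_
      rw [Finset.sum_mul, Finset.sum_mul]
      refine Finset.sum_congr rfl fun h _ => by ring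
end
end
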